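/- Let R be a commutative ring and let (c_n)_{n≥1} be a sequence in R. Define a sequence (a_n)_{n≥0} in R by a₀ = 0, a₁ = 1 and a_n = −a_{n−2} − c_{n−1} a_{n−1} for n ≥ 2. For n ≥ 1 and 1 ≤ k ≤ n, let t^{n}_{k,odd} denote the sum, over all sequences 1 ≤ i₁ < i₂ < ⋯ < i_k ≤ n with i₁ odd, i₂ even, i₃ odd, and so on alternating, of the products c_{i₁} c_{i₂} ⋯ c_{i_k}, with t^{n}_{0,odd} := 1. Then for every r ≥ 1: (a) a_{2r} = (−1)^r Σ_{k=0}^{r−1} (−1)^k t^{(2r−1)}_{2k+1,odd}, and (b) a_{2r−1} = (−1)^{r−1} Σ_{k=0}^{r−1} (−1)^k t^{(2r−2)}_{2k,odd}. -/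

import Mathlib

open Finset

/-- `t^n_{k,odd}` for a sequence `c`: the sum, over all strictly increasing sequences
`1 ≤ i₁ < ⋯ < i_k ≤ n` with `i₁` odd, `i₂` even, `i₃` odd, and so on alternating,
of `c_{i₁} ⋯ c_{i_k}`, with `t^n_{0,odd} := 1`. -/
def oddAltSum {R : Type*} [CommRing R] (c : ℕ → R) (n k : ℕ) : R :=
  if k = 0 then 1
  else ∑ s ∈ (Finset.powersetCard k (Finset.Icc 1 n)).filter
      (fun s => ((s.sort (· ≤ ·)).IsChain fun a b => (a + b) % 2 = 1) ∧
        ∀ h ∈ (s.sort (· ≤ ·)).head?, h % 2 = 1),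
    ∏ i ∈ s, c i


lemma sort_insert_max {m : ℕ} {s : Finset ℕ} (h₁ : ∀ b ∈ s, b ≤ m) (h₂ : m ∉ s) :
    (insert m s).sort (· ≤ ·) = s.sort (· ≤ ·) ++ [m] := by
  apply List.Perm.eq_of_pairwise' (Finset.pairwise_sort _ _) ?_ ?_
  · rw [List.pairwise_append]
    refine ⟨Finset.pairwise_sort _ _, List.pairwise_singleton _ m, ?_⟩
    intro x hx y hy
    simp at hy; subst hy
    exact h₁ x ((Finset.mem_sort _).1 hx)
  · exact ((Finset.sort_perm_toList _ _).trans ((Finset.toList_insert h₂).trans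
      (((Finset.sort_perm_toList _ _).symm.cons m).trans
        (List.perm_append_singleton _ _).symm)))

lemma chain'_parity {l : List ℕ} (hl : l.IsChain fun a b => (a + b) % 2 = 1) :
    ∀ x ∈ l.head?, ∀ y ∈ l.getLast?, (x + y + l.length) % 2 = 1 := by
  induction l with
  | nil => simp
  | cons a t ih =>
    cases t with
    | nil =>
      intro x hx y hy
      simp only [List.head?_cons, List.getLast?_singleton, Option.mem_def,
        Option.some.injEq, List.length_singleton] at hx hy ⊢
      omega
    | cons b u =>
      intro x hx y hy
      simp only [List.head?_cons, Option.mem_def, Option.some.injEq] at hx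
      subst hx
      rw [List.isChain_cons_cons] at hl
      rw [List.getLast?_cons_cons] at hy
      have h2 := ih hl.2 b rfl y hy
      have h1 := hl.1
      simp only [List.length_cons] at h2 ⊢
      omega

def Sf {R : Type*} [CommRing R] (c : ℕ → R) (n k : ℕ) : R :=
  ∑ s ∈ (Finset.powersetCard k (Finset.Icc 1 n)).filter
      (fun s => ((s.sort (· ≤ ·)).IsChain fun a b => (a + b) % 2 = 1) ∧
        ∀ h ∈ (s.sort (· ≤ ·)).head?, h % 2 = 1),
    ∏ i ∈ s, c i

lemma Sf_zero {R : Type*} [CommRing R] (c : ℕ → R) (n : ℕ) : Sf c n 0 = 1 := by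
  unfold Sf
  rw [Finset.powersetCard_zero]
  rw [Finset.filter_singleton]
  simp

lemma oddAltSum_eq_Sf {R : Type*} [CommRing R] (c : ℕ → R) (n k : ℕ) :
    oddAltSum c n k = Sf c n k := by
  unfold oddAltSum
  split_ifs with h
  · subst h; exact (Sf_zero c n).symm
  · rfl

lemma Sf_of_lt {R : Type*} [CommRing R] (c : ℕ → R) {n k : ℕ} (h : n < k) :
    Sf c n k = 0 := by
  unfold Sf
  have he : Finset.powersetCard k (Finset.Icc 1 n) = ∅ :=
    Finset.powersetCard_eq_empty.2 (by simpa using h)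
  rw [he]
  simp

lemma Sf_succ_succ {R : Type*} [CommRing R] (c : ℕ → R) (n k : ℕ) :
    Sf c (n+1) (k+1) = Sf c n (k+1) +
      (if (n+1) % 2 = (k+1) % 2 then c (n+1) * Sf c n k else 0) := by
  classical
  set P : Finset ℕ → Prop := fun s => ((s.sort (· ≤ ·)).IsChain fun a b => (a + b) % 2 = 1) ∧
        ∀ h ∈ (s.sort (· ≤ ·)).head?, h % 2 = 1 with hP
  have key : ∀ s ∈ ((Finset.powersetCard (k+1) (Finset.Icc 1 (n+1))).filter P).filter
      (fun s => (n+1) ∈ s),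
      (s.sort (· ≤ ·) = (s.erase (n+1)).sort (· ≤ ·) ++ [n+1]) := by
    intro s hs
    simp only [Finset.mem_filter, Finset.mem_powersetCard] at hs
    obtain ⟨⟨⟨hsub, hcard⟩, hPs⟩, hmem⟩ := hs
    conv_lhs => rw [← Finset.insert_erase hmem]
    apply sort_insert_max
    · intro b hb
      have := hsub (Finset.mem_of_mem_erase hb)
      simp only [Finset.mem_Icc] at this
      omega
    · exact Finset.notMem_erase _ _
  have parity : ∀ s ∈ ((Finset.powersetCard (k+1) (Finset.Icc 1 (n+1))).filter P).filter
      (fun s => (n+1) ∈ s), (n+1) % 2 = (k+1) % 2 := by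
    intro s hs
    have hsort := key s hs
    simp only [Finset.mem_filter, Finset.mem_powersetCard] at hs
    obtain ⟨⟨⟨hsub, hcard⟩, hPs⟩, hmem⟩ := hs
    have hlen : (s.sort (· ≤ ·)).length = k + 1 := by
      rw [Finset.length_sort, hcard]
    have hlast : (s.sort (· ≤ ·)).getLast? = some (n+1) := by
      rw [hsort, List.getLast?_append_of_ne_nil _ (by simp)]
      simp
    rcases List.eq_nil_or_concat ((s.erase (n+1)).sort (· ≤ ·)) with hnil | ⟨L, b, hLb⟩
    · -- sort s = [n+1], so k = 0 and head = n+1 is odd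
      rw [hsort, hnil] at hlen
      simp only [List.nil_append, List.length_singleton] at hlen
      have h1 := hPs.2 (n+1) (by rw [hsort, hnil]; simp)
      omega
    · have hne : (s.erase (n+1)).sort (· ≤ ·) ≠ [] := by rw [hLb]; simp
      obtain ⟨x, hx⟩ : ∃ x, ((s.erase (n+1)).sort (· ≤ ·)).head? = some x :=
        ⟨_, List.head?_eq_head hne⟩
      have hxhead : (s.sort (· ≤ ·)).head? = some x := by
        rw [hsort, List.head?_append_of_ne_nil _ hne, hx]
      have hodd := hPs.2 x hxhead
      have := chain'_parity hPs.1 x hxhead (n+1) hlast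
      rw [hlen] at this
      omega
  rw [show Sf c (n+1) (k+1) = ∑ s ∈ (Finset.powersetCard (k+1) (Finset.Icc 1 (n+1))).filter P,
      ∏ i ∈ s, c i from rfl]
  rw [← Finset.sum_filter_add_sum_filter_not
    ((Finset.powersetCard (k+1) (Finset.Icc 1 (n+1))).filter P) (fun s => (n+1) ∈ s)]
  have part1 : ((Finset.powersetCard (k+1) (Finset.Icc 1 (n+1))).filter P).filter
      (fun s => ¬ (n+1) ∈ s) = (Finset.powersetCard (k+1) (Finset.Icc 1 n)).filter P := by
    ext s
    simp only [Finset.mem_filter, Finset.mem_powersetCard]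
    constructor
    · rintro ⟨⟨⟨hsub, hcard⟩, hPs⟩, hnm⟩
      refine ⟨⟨?_, hcard⟩, hPs⟩
      intro x hx
      have := hsub hx
      simp only [Finset.mem_Icc] at this ⊢
      have : x ≠ n + 1 := fun h => hnm (h ▸ hx)
      simp only [Finset.mem_Icc] at *
      omega
    · rintro ⟨⟨hsub, hcard⟩, hPs⟩
      have hnm : (n+1) ∉ s := fun h => by
        have := hsub h; simp only [Finset.mem_Icc] at this; omega
      refine ⟨⟨⟨fun x hx => ?_, hcard⟩, hPs⟩, hnm⟩
      have := hsub hx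
      simp only [Finset.mem_Icc] at this ⊢
      omega
  rw [part1, add_comm]
  congr 1
  by_cases hpar : (n+1) % 2 = (k+1) % 2
  · rw [if_pos hpar]
    rw [show c (n+1) * Sf c n k = ∑ t ∈ (Finset.powersetCard k (Finset.Icc 1 n)).filter P,
      c (n+1) * ∏ i ∈ t, c i from by rw [Sf, Finset.mul_sum]]
    apply Finset.sum_nbij' (fun s => s.erase (n+1)) (fun t => insert (n+1) t)
    · -- hi
      intro s hs
      have hsort := key s hs
      simp only [Finset.mem_filter, Finset.mem_powersetCard] at hs ⊢
      obtain ⟨⟨⟨hsub, hcard⟩, hPs⟩, hmem⟩ := hs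
      refine ⟨⟨?_, ?_⟩, ?_, ?_⟩
      · intro x hx
        have h1 := hsub (Finset.mem_of_mem_erase hx)
        have h2 := Finset.ne_of_mem_erase hx
        simp only [Finset.mem_Icc] at h1 ⊢
        omega
      · rw [Finset.card_erase_of_mem hmem, hcard]; omega
      · have := hPs.1
        rw [hsort] at this
        exact (List.isChain_append.1 this).1
      · intro h hh
        apply hPs.2
        have hne : (s.erase (n+1)).sort (· ≤ ·) ≠ [] := by
          intro hc; rw [hc] at hh; simp at hh
        rw [hsort, List.head?_append_of_ne_nil _ hne]
        exact hh
    · -- hj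
      intro t ht
      simp only [Finset.mem_filter, Finset.mem_powersetCard] at ht ⊢
      obtain ⟨⟨hsub, hcard⟩, hPt⟩ := ht
      have hnm : (n+1) ∉ t := fun h => by
        have := hsub h; simp only [Finset.mem_Icc] at this; omega
      have hsort : (insert (n+1) t).sort (· ≤ ·) = t.sort (· ≤ ·) ++ [n+1] := by
        apply sort_insert_max _ hnm
        intro b hb
        have := hsub hb; simp only [Finset.mem_Icc] at this; omega
      refine ⟨⟨⟨?_, ?_⟩, ?_, ?_⟩, Finset.mem_insert_self _ _⟩
      · intro x hx
        rcases Finset.mem_insert.1 hx with rfl | hx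
        · simp only [Finset.mem_Icc]; omega
        · have := hsub hx; simp only [Finset.mem_Icc] at this ⊢; omega
      · rw [Finset.card_insert_of_notMem hnm, hcard]
      · rw [hsort]
        apply List.isChain_append.2
        refine ⟨hPt.1, List.isChain_singleton _, ?_⟩
        intro x hx y hy
        simp only [List.head?_cons, Option.mem_def, Option.some.injEq] at hy
        subst hy
        have hne : t.sort (· ≤ ·) ≠ [] := by
          intro hc; rw [hc] at hx; simp at hx
        have hh : ∃ h0, (t.sort (· ≤ ·)).head? = some h0 := ⟨_, List.head?_eq_head hne⟩
        obtain ⟨h0, hh0⟩ := hh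
        have hodd := hPt.2 h0 hh0
        have hcp := chain'_parity hPt.1 h0 hh0 x hx
        rw [Finset.length_sort, hcard] at hcp
        omega
      · intro h hh
        rw [hsort] at hh
        rcases List.eq_nil_or_concat (t.sort (· ≤ ·)) with hnil | ⟨L, b, hLb⟩
        · rw [hnil] at hh
          simp only [List.nil_append, List.head?_cons, Option.mem_def, Option.some.injEq] at hh
          subst hh
          have : t.card = 0 := by
            rw [← hcard] at *
            have := Finset.length_sort (α := ℕ) (· ≤ ·) (s := t)
            rw [hnil] at this
            simp at this
            omega
          have hk : k = 0 := by rw [← hcard, this]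
          omega
        · have hne : t.sort (· ≤ ·) ≠ [] := by rw [hLb]; simp
          rw [List.head?_append_of_ne_nil _ hne] at hh
          exact hPt.2 h hh
    · -- left_inv
      intro s hs
      simp only [Finset.mem_filter] at hs
      exact Finset.insert_erase hs.2
    · -- right_inv
      intro t ht
      simp only [Finset.mem_filter, Finset.mem_powersetCard] at ht
      have hnm : (n+1) ∉ t := fun h => by
        have := ht.1.1 h; simp only [Finset.mem_Icc] at this; omega
      exact Finset.erase_insert hnm
    · -- values
      intro s hs
      simp only [Finset.mem_filter] at hs
      exact (Finset.mul_prod_erase s c hs.2).symm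
  · rw [if_neg hpar]
    rw [Finset.sum_eq_zero]
    intro s hs
    exact absurd (parity s hs) hpar


lemma Sf_ee {R : Type*} [CommRing R] (c : ℕ → R) (r k : ℕ) :
    Sf c (2*r+2) (2*k+2) = Sf c (2*r) (2*k+2) + c (2*r+2) * Sf c (2*r+1) (2*k+1) := by
  have h1 := Sf_succ_succ c (2*r+1) (2*k+1)
  have h2 := Sf_succ_succ c (2*r) (2*k+1)
  rw [if_pos (by omega)] at h1
  rw [if_neg (by omega)] at h2
  have e1 : 2*r+1+1 = 2*r+2 := by omega
  have e2 : 2*k+1+1 = 2*k+2 := by omega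
  rw [e1, e2] at h1
  rw [e2, add_zero] at h2
  rw [h1, h2]

lemma Sf_oo {R : Type*} [CommRing R] (c : ℕ → R) (r k : ℕ) :
    Sf c (2*r+3) (2*k+1) = Sf c (2*r+1) (2*k+1) + c (2*r+3) * Sf c (2*r+2) (2*k) := by
  have h1 := Sf_succ_succ c (2*r+2) (2*k)
  have h2 := Sf_succ_succ c (2*r+1) (2*k)
  rw [if_pos (by omega)] at h1
  rw [if_neg (by omega)] at h2
  have e1 : 2*r+2+1 = 2*r+3 := by omega
  have e2 : 2*k+1 = 2*k+1 := rfl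
  have e3 : 2*r+1+1 = 2*r+2 := by omega
  rw [e1] at h1
  rw [e3, add_zero] at h2
  rw [h1, h2]

lemma aux {R : Type*} [CommRing R] (c : ℕ → R) (a : ℕ → R)
    (h0 : a 0 = 0) (h1 : a 1 = 1)
    (hrec : ∀ n, 2 ≤ n → a n = -a (n - 2) - c (n - 1) * a (n - 1)) :
    ∀ r : ℕ,
      (a (2*r+1) = (-1 : R)^r * ∑ k ∈ Finset.range (r+1), (-1 : R)^k * Sf c (2*r) (2*k)) ∧
      (a (2*r+2) = (-1 : R)^(r+1) * ∑ k ∈ Finset.range (r+1), (-1 : R)^k * Sf c (2*r+1) (2*k+1)) := by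
  intro r
  induction r with
  | zero =>
    constructor
    · simp [Finset.sum_range_one, Sf_zero, h1]
    · have h2 := hrec 2 (le_refl 2)
      norm_num at h2
      have hS : Sf c 1 1 = c 1 := by
        have := Sf_succ_succ c 0 0
        rw [if_pos (by omega), Sf_of_lt c (by omega : (0:ℕ) < 1), Sf_zero] at this
        simpa using this
      rw [h2, h0, h1]
      simp [Finset.sum_range_one, hS]
  | succ r ih =>
    obtain ⟨O, E⟩ := ih
    have hO' : a (2*(r+1)+1) = (-1 : R)^(r+1) *
        ∑ k ∈ Finset.range (r+2), (-1 : R)^k * Sf c (2*(r+1)) (2*k) := by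
      have hr3 := hrec (2*r+3) (by omega)
      rw [show 2*r+3-2 = 2*r+1 by omega, show 2*r+3-1 = 2*r+2 by omega] at hr3
      have hA : ∑ k ∈ Finset.range (r+2), (-1 : R)^k * Sf c (2*r+2) (2*k)
          = (1 + ∑ k ∈ Finset.range (r+1), (-1 : R)^(k+1) * Sf c (2*r) (2*k+2))
            - c (2*r+2) * ∑ k ∈ Finset.range (r+1), (-1 : R)^k * Sf c (2*r+1) (2*k+1) := by
        rw [Finset.sum_range_succ' (fun k => (-1 : R)^k * Sf c (2*r+2) (2*k)) (r+1)]
        have hterm : ∀ k ∈ Finset.range (r+1),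
            (-1 : R)^(k+1) * Sf c (2*r+2) (2*(k+1)) =
            (-1 : R)^(k+1) * Sf c (2*r) (2*k+2)
              - c (2*r+2) * ((-1 : R)^k * Sf c (2*r+1) (2*k+1)) := by
          intro k _
          rw [show 2*(k+1) = 2*k+2 by ring, Sf_ee]
          ring
        rw [Finset.sum_congr rfl hterm, Finset.sum_sub_distrib, Finset.mul_sum]
        simp [Sf_zero]
        ring
      have hB : (1 : R) + ∑ k ∈ Finset.range (r+1), (-1 : R)^(k+1) * Sf c (2*r) (2*k+2)
          = ∑ k ∈ Finset.range (r+1), (-1 : R)^k * Sf c (2*r) (2*k) := by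
        have hs' := Finset.sum_range_succ' (fun k => (-1 : R)^k * Sf c (2*r) (2*k)) (r+1)
        have hs := Finset.sum_range_succ (fun k => (-1 : R)^k * Sf c (2*r) (2*k)) (r+1)
        have hz : ((-1 : R)^(r+1) * Sf c (2*r) (2*(r+1))) = 0 := by
          rw [Sf_of_lt c (by omega)]; ring
        have hcong : ∀ k ∈ Finset.range (r+1),
            (fun k => (-1 : R)^k * Sf c (2*r) (2*k)) (k+1)
              = (-1 : R)^(k+1) * Sf c (2*r) (2*k+2) := by
          intro k _
          simp only
          rw [show 2*(k+1) = 2*k+2 by ring]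
        rw [hs', Finset.sum_congr rfl hcong] at hs
        rw [hz, add_zero] at hs
        have : ((-1:R)^0 * Sf c (2*r) (2*0)) = 1 := by simp [Sf_zero]
        rw [this] at hs
        linear_combination hs
      rw [show 2*(r+1)+1 = 2*r+3 by ring, show 2*(r+1) = 2*r+2 by ring, hr3, O, E, hA, ← hB]
      ring
    refine ⟨hO', ?_⟩
    have hr4 := hrec (2*r+4) (by omega)
    rw [show 2*r+4-2 = 2*r+2 by omega, show 2*r+4-1 = 2*r+3 by omega] at hr4
    have hsplit : ∑ k ∈ Finset.range (r+2), (-1 : R)^k * Sf c (2*r+3) (2*k+1)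
        = ∑ k ∈ Finset.range (r+2), (-1 : R)^k * Sf c (2*r+1) (2*k+1)
          + c (2*r+3) * ∑ k ∈ Finset.range (r+2), (-1 : R)^k * Sf c (2*r+2) (2*k) := by
      rw [Finset.mul_sum, ← Finset.sum_add_distrib]
      apply Finset.sum_congr rfl
      intro k _
      rw [Sf_oo]
      ring
    have htrunc : ∑ k ∈ Finset.range (r+2), (-1 : R)^k * Sf c (2*r+1) (2*k+1)
        = ∑ k ∈ Finset.range (r+1), (-1 : R)^k * Sf c (2*r+1) (2*k+1) := by
      rw [Finset.sum_range_succ, Sf_of_lt c (by omega : 2*r+1 < 2*(r+1)+1), mul_zero, add_zero]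
    have hO2 : a (2*r+3) = (-1 : R)^(r+1) *
        ∑ k ∈ Finset.range (r+2), (-1 : R)^k * Sf c (2*r+2) (2*k) := by
      rw [show 2*r+3 = 2*(r+1)+1 by ring, show (2*r+2 : ℕ) = 2*(r+1) by ring]
      exact hO'
    rw [show 2*(r+1)+2 = 2*r+4 by ring, show 2*(r+1)+1 = 2*r+3 by ring, hr4, E, hO2,
      hsplit, htrunc]
    ring

/-- Explicit description of the sequence `a₀ = 0`, `a₁ = 1`,
`a_n = −a_{n−2} − c_{n−1} a_{n−1}`:
(a) `a_{2r} = (−1)^r Σ_{k=0}^{r−1} (−1)^k t^{(2r−1)}_{2k+1,odd}` and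
(b) `a_{2r−1} = (−1)^{r−1} Σ_{k=0}^{r−1} (−1)^k t^{(2r−2)}_{2k,odd}`. -/
theorem stmt19 (R : Type*) [CommRing R] (c : ℕ → R) (a : ℕ → R)
    (h0 : a 0 = 0) (h1 : a 1 = 1)
    (hrec : ∀ n, 2 ≤ n → a n = -a (n - 2) - c (n - 1) * a (n - 1)) :
    ∀ r, 1 ≤ r →
      a (2 * r) = (-1 : R) ^ r *
        ∑ k ∈ Finset.range r, (-1 : R) ^ k * oddAltSum c (2 * r - 1) (2 * k + 1) ∧
      a (2 * r - 1) = (-1 : R) ^ (r - 1) *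
        ∑ k ∈ Finset.range r, (-1 : R) ^ k * oddAltSum c (2 * r - 2) (2 * k) := by
  intro r hr
  obtain ⟨m, rfl⟩ : ∃ m, r = m + 1 := ⟨r - 1, by omega⟩
  obtain ⟨O, E⟩ := aux c a h0 h1 hrec m
  constructor
  · simp only [oddAltSum_eq_Sf]
    rw [show 2*(m+1) = 2*m+2 by ring, show 2*m+2-1 = 2*m+1 by omega]
    exact E
  · simp only [oddAltSum_eq_Sf]
    rw [show 2*(m+1)-1 = 2*m+1 by omega, show (m+1)-1 = m by omega,
      show 2*(m+1)-2 = 2*m by omega]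
    exact O
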